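/- Let P and Q be homogeneous polynomials of degree n in ℂ[x_1,…,x_N], and suppose P is obtained from Q by a linear substitution of variables, i.e. P = Q ∘ A for some linear map A (each variable of Q is replaced by a linear form). Then for every k ≤ n and every τ ≥ 0, dim I^{P,k}_{n−k+τ} ≤ dim I^{Q,k}_{n−k+τ}. -/

import Mathlib

/-- Iterated partial derivative with respect to a list of variables. -/
noncomputable def pderivList {σ : Type*} (L : List σ) (P : MvPolynomial σ ℂ) :
    MvPolynomial σ ℂ :=
  L.foldr (fun i q => MvPolynomial.pderiv i q) P

/-- The span of all `M · ∂^k P/∂x^β` with `M` a monomial of degree `τ` and `|β| = k`, i.e.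
the degree-`(deg P - k + τ)` graded component of the `k`-th Jacobian ideal of `P`. -/
noncomputable def shiftedPartialsSpan {σ : Type*} (P : MvPolynomial σ ℂ) (k τ : ℕ) :
    Submodule ℂ (MvPolynomial σ ℂ) :=
  Submodule.span ℂ
    { q | ∃ (L : List σ) (M : σ →₀ ℕ), L.length = k ∧ (M.sum fun _ e => e) = τ ∧
        q = MvPolynomial.monomial M (1 : ℂ) * pderivList L P }

namespace ShiftedPartialsAux

open MvPolynomial Submodule Module

variable {N : ℕ}

lemma pderivList_nil (P : MvPolynomial (Fin N) ℂ) : pderivList [] P = P := rfl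

lemma pderivList_cons (i : Fin N) (L : List (Fin N)) (P : MvPolynomial (Fin N) ℂ) :
    pderivList (i :: L) P = MvPolynomial.pderiv i (pderivList L P) := rfl

/-- Chain rule for `aeval`. -/
lemma pderiv_aeval (A : Fin N → MvPolynomial (Fin N) ℂ) (i : Fin N)
    (f : MvPolynomial (Fin N) ℂ) :
    MvPolynomial.pderiv i (MvPolynomial.aeval A f)
      = ∑ j, MvPolynomial.pderiv i (A j) * MvPolynomial.aeval A (MvPolynomial.pderiv j f) := by
  induction f using MvPolynomial.induction_on with
  | C a => simp
  | add p q hp hq =>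
    simp only [map_add, hp, hq, mul_add, Finset.sum_add_distrib]
  | mul_X q j hq =>
    have hterm : ∀ l : Fin N,
        MvPolynomial.pderiv i (A l) * MvPolynomial.aeval A (MvPolynomial.pderiv l (q * MvPolynomial.X j))
          = MvPolynomial.pderiv i (A l) * MvPolynomial.aeval A (MvPolynomial.pderiv l q) * A j
            + (if l = j then MvPolynomial.pderiv i (A l) * MvPolynomial.aeval A q else 0) := by
      intro l
      rw [MvPolynomial.pderiv_mul]
      rcases eq_or_ne l j with rfl | h
      · rw [MvPolynomial.pderiv_X_self, mul_one, if_pos rfl, map_add, map_mul,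
          MvPolynomial.aeval_X, mul_add, mul_assoc]
      · rw [MvPolynomial.pderiv_X_of_ne (Ne.symm h), mul_zero, add_zero, if_neg h, add_zero,
          map_mul, MvPolynomial.aeval_X, mul_assoc]
    rw [map_mul, MvPolynomial.aeval_X, MvPolynomial.pderiv_mul, hq,
      Finset.sum_congr rfl fun l _ => hterm l, Finset.sum_add_distrib,
      Finset.sum_ite_eq' Finset.univ j
        (fun l => MvPolynomial.pderiv i (A l) * MvPolynomial.aeval A q),
      if_pos (Finset.mem_univ j), Finset.sum_mul, mul_comm (MvPolynomial.aeval A q) _]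

/-- The substitution associated to a matrix. -/
noncomputable def subst (m : Matrix (Fin N) (Fin N) ℂ) : Fin N → MvPolynomial (Fin N) ℂ :=
  fun j => ∑ i, MvPolynomial.monomial (Finsupp.single i 1) (m i j)

lemma subst_isHomogeneous (m : Matrix (Fin N) (Fin N) ℂ) (j : Fin N) :
    (subst m j).IsHomogeneous 1 := by
  apply MvPolynomial.IsHomogeneous.sum
  intro i _
  exact MvPolynomial.isHomogeneous_monomial _ (by simp [Finsupp.degree_single])

lemma pderiv_subst (m : Matrix (Fin N) (Fin N) ℂ) (i j : Fin N) :
    MvPolynomial.pderiv i (subst m j) = MvPolynomial.C (m i j) := by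
  classical
  rw [subst, map_sum, Finset.sum_eq_single i]
  · rw [MvPolynomial.pderiv_monomial, tsub_self, Finsupp.single_eq_same, Nat.cast_one, mul_one,
      MvPolynomial.C_apply]
  · intro l _ hl
    rw [MvPolynomial.pderiv_monomial, Finsupp.single_eq_of_ne' hl, Nat.cast_zero, mul_zero,
      MvPolynomial.monomial_zero]
  · intro h
    exact absurd (Finset.mem_univ i) h

lemma aeval_subst_subst (m m' : Matrix (Fin N) (Fin N) ℂ) (f : MvPolynomial (Fin N) ℂ) :
    MvPolynomial.aeval (subst m) (MvPolynomial.aeval (subst m') f)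
      = MvPolynomial.aeval (subst (m * m')) f := by
  have hsingle : ∀ (c : ℂ) (i : Fin N),
      MvPolynomial.aeval (subst m) (MvPolynomial.monomial (Finsupp.single i 1) c)
        = ∑ l, MvPolynomial.monomial (Finsupp.single l 1) (m l i * c) := by
    intro c i
    rw [MvPolynomial.aeval_monomial, Finsupp.prod_single_index (by rw [pow_zero]), pow_one,
      MvPolynomial.algebraMap_eq, subst, Finset.mul_sum]
    apply Finset.sum_congr rfl
    intro l _
    rw [MvPolynomial.C_mul_monomial, mul_comm]
  have key : (MvPolynomial.aeval (subst m)).comp (MvPolynomial.aeval (subst m'))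
      = MvPolynomial.aeval (R := ℂ) (subst (m * m')) := by
    apply MvPolynomial.algHom_ext
    intro j
    rw [AlgHom.comp_apply, MvPolynomial.aeval_X, MvPolynomial.aeval_X]
    rw [subst, map_sum, Finset.sum_congr rfl fun i _ => hsingle (m' i j) i, Finset.sum_comm]
    rw [subst]
    apply Finset.sum_congr rfl
    intro l _
    rw [← map_sum (MvPolynomial.monomial (Finsupp.single l 1)) (fun i => m l i * m' i j)
      Finset.univ, Matrix.mul_apply]
  exact DFunLike.congr_fun key f

lemma subst_one : subst (1 : Matrix (Fin N) (Fin N) ℂ) = MvPolynomial.X := by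
  funext j
  rw [subst, Finset.sum_eq_single j]
  · rw [Matrix.one_apply_eq]
    rfl
  · intro l _ hl
    rw [Matrix.one_apply_ne hl]
    simp
  · intro h
    exact absurd (Finset.mem_univ j) h

/-- Total degree bound for generators. -/
lemma totalDegree_pderiv_le (i : Fin N) (f : MvPolynomial (Fin N) ℂ) :
    (MvPolynomial.pderiv i f).totalDegree ≤ f.totalDegree := by
  conv_lhs => rw [f.as_sum]
  rw [map_sum]
  apply (MvPolynomial.totalDegree_finset_sum _ _).trans
  apply Finset.sup_le
  intro v hv
  rw [MvPolynomial.pderiv_monomial]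
  apply (MvPolynomial.totalDegree_monomial_le _ _).trans
  apply le_trans _ (MvPolynomial.le_totalDegree hv)
  rw [Finsupp.sum_fintype _ _ (fun _ => rfl), Finsupp.sum_fintype _ _ (fun _ => rfl)]
  apply Finset.sum_le_sum
  intro l _
  exact tsub_le_self.trans le_rfl

lemma totalDegree_pderivList_le (L : List (Fin N)) (f : MvPolynomial (Fin N) ℂ) :
    (pderivList L f).totalDegree ≤ f.totalDegree := by
  induction L with
  | nil => exact le_rfl
  | cons i L ih => exact (totalDegree_pderiv_le i _).trans ih

lemma fd_span (s : Set (MvPolynomial (Fin N) ℂ)) (c : ℕ)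
    (h : ∀ p ∈ s, p.totalDegree ≤ c) :
    FiniteDimensional ℂ (Submodule.span ℂ s) := by
  have hle : Submodule.span ℂ s ≤ MvPolynomial.restrictTotalDegree (Fin N) ℂ c :=
    Submodule.span_le.2 fun p hp => (MvPolynomial.mem_restrictTotalDegree _ _ _).2 (h p hp)
  exact Submodule.finiteDimensional_of_le hle

lemma fd_sps (f : MvPolynomial (Fin N) ℂ) (k τ : ℕ) :
    FiniteDimensional ℂ (shiftedPartialsSpan f k τ) := by
  apply fd_span _ (τ + f.totalDegree)
  rintro q ⟨L, M, hL, hM, rfl⟩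
  calc (MvPolynomial.monomial M 1 * pderivList L f).totalDegree
      ≤ (MvPolynomial.monomial M (1:ℂ)).totalDegree + (pderivList L f).totalDegree :=
        MvPolynomial.totalDegree_mul _ _
    _ ≤ τ + f.totalDegree := by
        gcongr
        · exact le_of_eq (by rw [MvPolynomial.totalDegree_monomial _ one_ne_zero, hM])
        · exact totalDegree_pderivList_le _ _


lemma degree_eq_sum (M : Fin N →₀ ℕ) : (M.sum fun _ e => e) = M.degree := by
  rw [Finsupp.degree, Finsupp.sum]
  rfl

lemma pderivList_aeval_subst_mem (m : Matrix (Fin N) (Fin N) ℂ) (Q : MvPolynomial (Fin N) ℂ)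
    (L : List (Fin N)) :
    pderivList L (MvPolynomial.aeval (subst m) Q) ∈
      Submodule.span ℂ {q | ∃ L' : List (Fin N), L'.length = L.length ∧
        q = MvPolynomial.aeval (subst m) (pderivList L' Q)} := by
  induction L with
  | nil => exact Submodule.subset_span ⟨[], rfl, rfl⟩
  | cons i L ih =>
    rw [pderivList_cons]
    have main : ∀ x ∈ Submodule.span ℂ {q | ∃ L' : List (Fin N), L'.length = L.length ∧
        q = MvPolynomial.aeval (subst m) (pderivList L' Q)},
        MvPolynomial.pderiv i x ∈ Submodule.span ℂ {q | ∃ L' : List (Fin N),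
          L'.length = (i :: L).length ∧ q = MvPolynomial.aeval (subst m) (pderivList L' Q)} := by
      intro x hx
      induction hx using Submodule.span_induction with
      | mem x hx =>
        obtain ⟨L', hlen, rfl⟩ := hx
        rw [pderiv_aeval]
        rw [Finset.sum_congr rfl fun j _ => by rw [pderiv_subst, MvPolynomial.C_mul']]
        apply Submodule.sum_mem
        intro j _
        exact Submodule.smul_mem _ _ (Submodule.subset_span ⟨j :: L', by simp [hlen], rfl⟩)
      | zero => simp
      | add x y _ _ hx hy => rw [map_add]; exact Submodule.add_mem _ hx hy
      | smul c x _ hx => rw [Derivation.map_smul]; exact Submodule.smul_mem _ _ hx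
    exact main _ ih

lemma finrank_sps_subst_le (m m' : Matrix (Fin N) (Fin N) ℂ) (hmm' : m * m' = 1)
    (Q : MvPolynomial (Fin N) ℂ) (k τ : ℕ) :
    Module.finrank ℂ (shiftedPartialsSpan (MvPolynomial.aeval (subst m) Q) k τ)
      ≤ Module.finrank ℂ (shiftedPartialsSpan Q k τ) := by
  haveI := fd_sps Q k τ
  have key : shiftedPartialsSpan (MvPolynomial.aeval (subst m) Q) k τ ≤
      Submodule.map (MvPolynomial.aeval (subst m)).toLinearMap (shiftedPartialsSpan Q k τ) := by
    rw [shiftedPartialsSpan, Submodule.span_le]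
    rintro q ⟨L, M, hL, hM, rfl⟩
    have h2 : MvPolynomial.monomial M (1:ℂ) * pderivList L (MvPolynomial.aeval (subst m) Q)
        ∈ Submodule.map (LinearMap.mulLeft ℂ (MvPolynomial.monomial M (1:ℂ)))
            (Submodule.span ℂ {q | ∃ L' : List (Fin N), L'.length = L.length ∧
              q = MvPolynomial.aeval (subst m) (pderivList L' Q)}) :=
      Submodule.mem_map_of_mem (pderivList_aeval_subst_mem m Q L)
    rw [Submodule.map_span] at h2
    refine Submodule.span_le.2 ?_ h2
    rintro y ⟨x, ⟨L', hlen, rfl⟩, rfl⟩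
    set g := MvPolynomial.aeval (subst m') (MvPolynomial.monomial M (1:ℂ)) with hgdef
    have hghom : g.IsHomogeneous τ := by
      have hmono : (MvPolynomial.monomial M (1:ℂ)).IsHomogeneous τ :=
        MvPolynomial.isHomogeneous_monomial _ ((degree_eq_sum M).symm.trans hM)
      have h := hmono.aeval (subst m') (subst_isHomogeneous m')
      rw [one_mul] at h
      exact h
    have hTg : MvPolynomial.aeval (subst m) g = MvPolynomial.monomial M (1:ℂ) := by
      rw [hgdef, aeval_subst_subst, hmm', subst_one, MvPolynomial.aeval_X_left_apply]
    have hmem : g * pderivList L' Q ∈ shiftedPartialsSpan Q k τ := by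
      have hexp : g * pderivList L' Q = ∑ M' ∈ g.support,
          MvPolynomial.monomial M' (MvPolynomial.coeff M' g) * pderivList L' Q := by
        conv_lhs => rw [g.as_sum]
        rw [Finset.sum_mul]
      rw [hexp]
      apply Submodule.sum_mem
      intro M' hM'
      have hdeg : (M'.sum fun _ e => e) = τ := by
        by_contra hne
        exact (MvPolynomial.mem_support_iff.1 hM')
          (hghom.coeff_eq_zero (fun h => hne ((degree_eq_sum M').trans h)))
      have hrw : MvPolynomial.monomial M' (MvPolynomial.coeff M' g) =
          (MvPolynomial.coeff M' g) • MvPolynomial.monomial M' (1:ℂ) := by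
        rw [MvPolynomial.smul_monomial, smul_eq_mul, mul_one]
      rw [hrw, smul_mul_assoc]
      exact Submodule.smul_mem _ _
        (Submodule.subset_span ⟨L', M', hlen.trans hL, hdeg, rfl⟩)
    have hrw2 : MvPolynomial.monomial M (1:ℂ) * MvPolynomial.aeval (subst m) (pderivList L' Q)
        = (MvPolynomial.aeval (subst m)).toLinearMap (g * pderivList L' Q) := by
      rw [AlgHom.toLinearMap_apply, map_mul, hTg]
    rw [LinearMap.mulLeft_apply, hrw2]
    exact Submodule.mem_map_of_mem hmem
  calc Module.finrank ℂ (shiftedPartialsSpan (MvPolynomial.aeval (subst m) Q) k τ)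
      ≤ Module.finrank ℂ (Submodule.map (MvPolynomial.aeval (subst m)).toLinearMap
          (shiftedPartialsSpan Q k τ)) := Submodule.finrank_mono key
    _ ≤ Module.finrank ℂ (shiftedPartialsSpan Q k τ) := Submodule.finrank_map_le _ _


section Proj

variable (pS : Fin N → Prop) [DecidablePred pS]

/-- Weights: `0` on kept variables, `1` on killed ones. -/
def projW : Fin N → ℕ := fun i => if pS i then 0 else 1

/-- The substitution keeping variables in `pS` and killing the others. -/
noncomputable def projD : Fin N → MvPolynomial (Fin N) ℂ :=
  fun j => if pS j then MvPolynomial.X j else 0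

lemma weight_le_sum (M : Fin N →₀ ℕ) :
    (Finsupp.weight (projW pS)) M ≤ M.sum fun _ e => e := by
  rw [Finsupp.weight_apply, Finsupp.sum, Finsupp.sum]
  apply Finset.sum_le_sum
  intro i _
  rw [smul_eq_mul, projW]
  split
  · simp
  · simp

lemma weight_sub (M d : Fin N →₀ ℕ) (h : M ≤ d) :
    (Finsupp.weight (projW pS)) d
      = (Finsupp.weight (projW pS)) M + (Finsupp.weight (projW pS)) (d - M) := by
  conv_lhs => rw [← add_tsub_cancel_of_le h]
  rw [map_add]

lemma weight_single_eq (j : Fin N) :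
    (Finsupp.weight (projW pS)) (Finsupp.single j 1) = projW pS j := by
  rw [Finsupp.weight_apply, Finsupp.sum_single_index (by rw [zero_smul]), one_smul]

lemma weight_sub_single (d : Fin N →₀ ℕ) (j : Fin N) (hj : j ∈ d.support) :
    (Finsupp.weight (projW pS)) d
      = projW pS j + (Finsupp.weight (projW pS)) (d - Finsupp.single j 1) := by
  have hle : Finsupp.single j 1 ≤ d := by
    rw [Finsupp.single_le_iff]
    exact Nat.one_le_iff_ne_zero.2 (Finsupp.mem_support_iff.1 hj)
  rw [weight_sub pS _ _ hle, weight_single_eq]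

lemma aeval_projD (f : MvPolynomial (Fin N) ℂ) :
    MvPolynomial.aeval (projD pS) f
      = MvPolynomial.weightedHomogeneousComponent (projW pS) 0 f := by
  induction f using MvPolynomial.induction_on with
  | C a =>
    rw [MvPolynomial.aeval_C, MvPolynomial.algebraMap_eq]
    ext d
    rw [MvPolynomial.coeff_weightedHomogeneousComponent]
    split_ifs with h
    · rfl
    · rw [MvPolynomial.coeff_C, if_neg (fun hd => h (by rw [← hd, map_zero]))]
  | add p q hp hq => rw [map_add, map_add, hp, hq]
  | mul_X q j hq =>
    rw [map_mul, MvPolynomial.aeval_X, hq]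
    simp only [projD]
    by_cases hj : pS j
    · rw [if_pos hj]
      ext d
      simp only [MvPolynomial.coeff_mul_X', MvPolynomial.coeff_weightedHomogeneousComponent]
      by_cases hd : j ∈ d.support
      · simp only [if_pos hd]
        have hw : (Finsupp.weight (projW pS)) d
            = (Finsupp.weight (projW pS)) (d - Finsupp.single j 1) := by
          rw [weight_sub_single pS d j hd, projW, if_pos hj, zero_add]
        rw [hw]
      · simp only [if_neg hd, ite_self]
    · rw [if_neg hj, mul_zero]
      ext d
      simp only [MvPolynomial.coeff_zero, MvPolynomial.coeff_weightedHomogeneousComponent,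
        MvPolynomial.coeff_mul_X']
      split_ifs with h hd
      · exfalso
        have hw := weight_sub_single pS d j hd
        rw [h, projW, if_neg hj] at hw
        omega
      · rfl
      · rfl

lemma pderiv_aeval_projD (i : Fin N) (f : MvPolynomial (Fin N) ℂ) :
    MvPolynomial.pderiv i (MvPolynomial.aeval (projD pS) f)
      = if pS i then MvPolynomial.aeval (projD pS) (MvPolynomial.pderiv i f) else 0 := by
  rw [pderiv_aeval]
  rw [Finset.sum_eq_single i ?_ ?_]
  · simp only [projD]
    by_cases hi : pS i
    · rw [if_pos hi, if_pos hi, MvPolynomial.pderiv_X_self, one_mul]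
    · rw [if_neg hi, if_neg hi, map_zero, zero_mul]
  · intro j _ hj
    simp only [projD]
    by_cases hjS : pS j
    · rw [if_pos hjS, MvPolynomial.pderiv_X_of_ne hj, zero_mul]
    · rw [if_neg hjS, map_zero, zero_mul]
  · intro h
    exact absurd (Finset.mem_univ i) h

lemma pderivList_aeval_projD_good (L : List (Fin N)) (hL : ∀ i ∈ L, pS i)
    (Q : MvPolynomial (Fin N) ℂ) :
    pderivList L (MvPolynomial.aeval (projD pS) Q)
      = MvPolynomial.aeval (projD pS) (pderivList L Q) := by
  induction L with
  | nil => rfl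
  | cons i L ih =>
    rw [pderivList_cons, ih (fun j hj => hL j (List.mem_cons_of_mem i hj)),
      pderiv_aeval_projD, if_pos (hL i List.mem_cons_self)]
    rfl

lemma pderivList_aeval_projD_bad (L : List (Fin N)) (hL : ¬ ∀ i ∈ L, pS i)
    (Q : MvPolynomial (Fin N) ℂ) :
    pderivList L (MvPolynomial.aeval (projD pS) Q) = 0 := by
  induction L with
  | nil => exact absurd (by simp) hL
  | cons i L ih =>
    rw [pderivList_cons]
    by_cases h : ∀ j ∈ L, pS j
    · have hi : ¬ pS i := by
        intro hi
        apply hL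
        intro j hj
        rcases List.mem_cons.1 hj with rfl | hj'
        · exact hi
        · exact h j hj'
      rw [pderivList_aeval_projD_good pS L h Q, pderiv_aeval_projD, if_neg hi]
    · rw [ih h, map_zero]

lemma component_monomial_mul_lt (M : Fin N →₀ ℕ) (g : MvPolynomial (Fin N) ℂ) (t : ℕ)
    (ht : t < (Finsupp.weight (projW pS)) M) :
    MvPolynomial.weightedHomogeneousComponent (projW pS) t
      (MvPolynomial.monomial M (1:ℂ) * g) = 0 := by
  ext d
  rw [MvPolynomial.coeff_weightedHomogeneousComponent, MvPolynomial.coeff_zero]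
  split_ifs with h
  · rw [MvPolynomial.coeff_monomial_mul', if_neg]
    intro hle
    have hw := weight_sub pS M d hle
    omega
  · rfl

lemma component_monomial_mul_eq (M : Fin N →₀ ℕ) (g : MvPolynomial (Fin N) ℂ) :
    MvPolynomial.weightedHomogeneousComponent (projW pS) ((Finsupp.weight (projW pS)) M)
      (MvPolynomial.monomial M (1:ℂ) * g)
      = MvPolynomial.monomial M (1:ℂ)
          * MvPolynomial.weightedHomogeneousComponent (projW pS) 0 g := by
  ext d
  rw [MvPolynomial.coeff_weightedHomogeneousComponent, MvPolynomial.coeff_monomial_mul',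
    MvPolynomial.coeff_monomial_mul']
  simp only [one_mul]
  by_cases hle : M ≤ d
  · have hw := weight_sub pS M d hle
    rw [if_pos hle, if_pos hle, MvPolynomial.coeff_weightedHomogeneousComponent]
    by_cases h0 : (Finsupp.weight (projW pS)) (d - M) = 0
    · rw [if_pos h0, if_pos (by omega)]
    · rw [if_neg h0, if_neg (by omega)]
  · rw [if_neg hle, if_neg hle, ite_self]

end Proj

section Count

variable {V : Type*} [AddCommGroup V] [Module ℂ V]

lemma finrank_finset_sup_le (t : Finset ℕ) (W : ℕ → Submodule ℂ V)
    (hfd : ∀ s, FiniteDimensional ℂ (W s)) :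
    Module.finrank ℂ ↥(t.sup W) ≤ ∑ s ∈ t, Module.finrank ℂ (W s) := by
  classical
  haveI : ∀ s, Module.Finite ℂ (W s) := hfd
  induction t using Finset.induction_on with
  | empty => simp
  | insert a t ha ih =>
    rw [Finset.sup_insert, Finset.sum_insert ha]
    have h := Submodule.finrank_sup_add_finrank_inf_eq (W a) (t.sup W)
    have h2 : Module.finrank ℂ ↥(W a ⊔ t.sup W)
        ≤ Module.finrank ℂ (W a) + Module.finrank ℂ ↥(t.sup W) := by omega
    exact h2.trans (Nat.add_le_add_left ih _)

lemma count_lemma (m : ℕ) (π : ℕ → V →ₗ[ℂ] V) (W : ℕ → Submodule ℂ V)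
    (hfd : ∀ s, FiniteDimensional ℂ (W s))
    (hkill : ∀ t s, t < s → Submodule.map (π t) (W s) = ⊥) :
    ∑ s ∈ Finset.range m, Module.finrank ℂ (Submodule.map (π s) (W s))
      ≤ Module.finrank ℂ ↥((Finset.range m).sup W) := by
  induction m generalizing π W with
  | zero => simp
  | succ m ih =>
    haveI : ∀ s, Module.Finite ℂ (W s) := hfd
    have ihs := ih (fun s => π (s + 1)) (fun s => W (s + 1)) (fun s => hfd (s + 1))
      (fun t s hts => hkill (t + 1) (s + 1) (by omega))
    have hsup : (Finset.range (m + 1)).sup W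
        = W 0 ⊔ (Finset.range m).sup (fun s => W (s + 1)) := by
      apply le_antisymm
      · apply Finset.sup_le
        intro s hs
        rcases s with _ | s'
        · exact le_sup_left
        · refine le_trans (Finset.le_sup (f := fun s => W (s + 1)) ?_) le_sup_right
          rw [Finset.mem_range] at hs ⊢
          omega
      · apply sup_le
        · exact Finset.le_sup (by simp)
        · apply Finset.sup_le
          intro s hs
          apply Finset.le_sup
          rw [Finset.mem_range] at hs ⊢
          omega
    haveI hWrfd : FiniteDimensional ℂ ↥((Finset.range m).sup (fun s => W (s + 1))) :=
      inferInstance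
    haveI : FiniteDimensional ℂ ↥(W 0 ⊔ (Finset.range m).sup (fun s => W (s + 1))) :=
      Submodule.finiteDimensional_sup _ _
    have hrn := LinearMap.finrank_range_add_finrank_ker
      ((π 0).domRestrict (W 0 ⊔ (Finset.range m).sup (fun s => W (s + 1))))
    rw [LinearMap.range_domRestrict, LinearMap.ker_domRestrict] at hrn
    have h1 : Module.finrank ℂ (Submodule.map (π 0) (W 0))
        ≤ Module.finrank ℂ (Submodule.map (π 0)
            (W 0 ⊔ (Finset.range m).sup (fun s => W (s + 1)))) :=
      Submodule.finrank_mono (Submodule.map_mono le_sup_left)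
    have hWrker : (Finset.range m).sup (fun s => W (s + 1)) ≤ LinearMap.ker (π 0) := by
      apply Finset.sup_le
      intro s hs
      have hb := hkill 0 (s + 1) (by omega)
      rw [eq_bot_iff] at hb
      exact Submodule.map_le_iff_le_comap.1 hb
    have h2 : Module.finrank ℂ ↥((Finset.range m).sup (fun s => W (s + 1)))
        ≤ Module.finrank ℂ (Submodule.comap
            (W 0 ⊔ (Finset.range m).sup (fun s => W (s + 1))).subtype
            (LinearMap.ker (π 0))) := by
      have e := Submodule.comapSubtypeEquivOfLe
        (le_sup_right : (Finset.range m).sup (fun s => W (s + 1))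
          ≤ W 0 ⊔ (Finset.range m).sup (fun s => W (s + 1)))
      rw [← e.finrank_eq]
      exact Submodule.finrank_mono (Submodule.comap_mono hWrker)
    rw [Finset.sum_range_succ', hsup]
    calc (∑ s ∈ Finset.range m, Module.finrank ℂ
            (Submodule.map (π (s + 1)) (W (s + 1))))
          + Module.finrank ℂ (Submodule.map (π 0) (W 0))
        ≤ Module.finrank ℂ (Submodule.comap
              (W 0 ⊔ (Finset.range m).sup (fun s => W (s + 1))).subtype
              (LinearMap.ker (π 0)))
            + Module.finrank ℂ (Submodule.map (π 0)
              (W 0 ⊔ (Finset.range m).sup (fun s => W (s + 1)))) :=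
          Nat.add_le_add (ihs.trans h2) h1
      _ = Module.finrank ℂ ↥(W 0 ⊔ (Finset.range m).sup (fun s => W (s + 1))) := by omega

end Count


lemma gen_totalDegree_le (f : MvPolynomial (Fin N) ℂ) (τ : ℕ) (M : Fin N →₀ ℕ)
    (L : List (Fin N)) (hM : (M.sum fun _ e => e) = τ) :
    (MvPolynomial.monomial M (1:ℂ) * pderivList L f).totalDegree ≤ τ + f.totalDegree := by
  calc (MvPolynomial.monomial M (1:ℂ) * pderivList L f).totalDegree
      ≤ (MvPolynomial.monomial M (1:ℂ)).totalDegree + (pderivList L f).totalDegree :=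
        MvPolynomial.totalDegree_mul _ _
    _ ≤ τ + f.totalDegree := by
        gcongr
        · exact le_of_eq (by rw [MvPolynomial.totalDegree_monomial _ one_ne_zero, hM])
        · exact totalDegree_pderivList_le _ _

lemma finrank_sps_projD_le (pS : Fin N → Prop) [DecidablePred pS]
    (Q : MvPolynomial (Fin N) ℂ) (k τ : ℕ) :
    Module.finrank ℂ (shiftedPartialsSpan (MvPolynomial.aeval (projD pS) Q) k τ)
      ≤ Module.finrank ℂ (shiftedPartialsSpan Q k τ) := by
  classical
  set w := projW pS with hw
  set P₂ := MvPolynomial.aeval (projD pS) Q with hP2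
  set Gs : ℕ → Set (MvPolynomial (Fin N) ℂ) := fun s =>
    {q | ∃ (L : List (Fin N)) (M : Fin N →₀ ℕ), L.length = k ∧ (M.sum fun _ e => e) = τ ∧
      (Finsupp.weight w) M = s ∧ q = MvPolynomial.monomial M (1:ℂ) * pderivList L P₂}
    with hGs
  set VS : ℕ → Submodule ℂ (MvPolynomial (Fin N) ℂ) := fun s =>
    Submodule.span ℂ {q | ∃ (L : List (Fin N)) (M : Fin N →₀ ℕ), L.length = k ∧
      (M.sum fun _ e => e) = τ ∧ (Finsupp.weight w) M = s ∧
      q = MvPolynomial.monomial M (1:ℂ) * pderivList L Q} with hVS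
  have hVSfd : ∀ s, FiniteDimensional ℂ (VS s) := by
    intro s
    apply fd_span _ (τ + Q.totalDegree)
    rintro q ⟨L, M, hL, hM, hwM, rfl⟩
    exact gen_totalDegree_le Q τ M L hM
  haveI := hVSfd
  have hGfd : ∀ s, FiniteDimensional ℂ (Submodule.span ℂ (Gs s)) := by
    intro s
    apply fd_span _ (τ + P₂.totalDegree)
    rintro q ⟨L, M, hL, hM, hwM, rfl⟩
    exact gen_totalDegree_le P₂ τ M L hM
  have hsetEq : {q | ∃ (L : List (Fin N)) (M : Fin N →₀ ℕ), L.length = k ∧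
      (M.sum fun _ e => e) = τ ∧ q = MvPolynomial.monomial M (1:ℂ) * pderivList L P₂}
      = ⋃ s ∈ Finset.range (τ + 1), Gs s := by
    ext q
    simp only [Set.mem_iUnion, Set.mem_setOf_eq, hGs]
    constructor
    · rintro ⟨L, M, hL, hM, rfl⟩
      refine ⟨(Finsupp.weight w) M, Finset.mem_range.2 ?_, L, M, hL, hM, rfl, rfl⟩
      have := weight_le_sum pS M
      rw [← hw] at this
      omega
    · rintro ⟨s, hs, L, M, hL, hM, hwM, rfl⟩
      exact ⟨L, M, hL, hM, rfl⟩
  have hspanEq : shiftedPartialsSpan P₂ k τ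
      = (Finset.range (τ + 1)).sup (fun s => Submodule.span ℂ (Gs s)) := by
    rw [shiftedPartialsSpan, hsetEq, Submodule.span_iUnion₂, Finset.sup_eq_iSup]
  have hGle : ∀ s, Submodule.span ℂ (Gs s)
      ≤ Submodule.map (MvPolynomial.weightedHomogeneousComponent w s) (VS s) := by
    intro s
    rw [Submodule.span_le]
    rintro q ⟨L, M, hL, hM, hwM, rfl⟩
    by_cases hgood : ∀ i ∈ L, pS i
    · have h1 : pderivList L P₂
          = MvPolynomial.weightedHomogeneousComponent w 0 (pderivList L Q) := by
        rw [hP2, pderivList_aeval_projD_good pS L hgood Q, aeval_projD, hw]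
      have h2 : MvPolynomial.monomial M (1:ℂ) * pderivList L P₂
          = (MvPolynomial.weightedHomogeneousComponent w s)
              (MvPolynomial.monomial M (1:ℂ) * pderivList L Q) := by
        rw [h1, ← hwM, hw, component_monomial_mul_eq]
      rw [SetLike.mem_coe, h2]
      exact Submodule.mem_map_of_mem (Submodule.subset_span ⟨L, M, hL, hM, hwM, rfl⟩)
    · have h1 : MvPolynomial.monomial M (1:ℂ) * pderivList L P₂ = 0 := by
        rw [hP2, pderivList_aeval_projD_bad pS L hgood Q, mul_zero]
      rw [SetLike.mem_coe, h1]
      exact Submodule.zero_mem _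
  have hkill : ∀ t s, t < s →
      Submodule.map (MvPolynomial.weightedHomogeneousComponent w t) (VS s) = ⊥ := by
    intro t s hts
    rw [hVS, Submodule.map_span, Submodule.span_eq_bot]
    rintro x ⟨y, ⟨L, M, hL, hM, hwM, rfl⟩, rfl⟩
    rw [hw]
    exact component_monomial_mul_lt pS M _ t (by rw [← hw]; omega)
  haveI := fd_sps Q k τ
  calc Module.finrank ℂ (shiftedPartialsSpan P₂ k τ)
      = Module.finrank ℂ ↥((Finset.range (τ + 1)).sup (fun s => Submodule.span ℂ (Gs s))) := by
        rw [hspanEq]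
    _ ≤ ∑ s ∈ Finset.range (τ + 1), Module.finrank ℂ (Submodule.span ℂ (Gs s)) :=
        finrank_finset_sup_le _ _ hGfd
    _ ≤ ∑ s ∈ Finset.range (τ + 1), Module.finrank ℂ
          (Submodule.map (MvPolynomial.weightedHomogeneousComponent w s) (VS s)) := by
        apply Finset.sum_le_sum
        intro s _
        exact Submodule.finrank_mono (hGle s)
    _ ≤ Module.finrank ℂ ↥((Finset.range (τ + 1)).sup VS) :=
        count_lemma (τ + 1) (fun s => MvPolynomial.weightedHomogeneousComponent w s) VS
          hVSfd hkill
    _ ≤ Module.finrank ℂ (shiftedPartialsSpan Q k τ) := by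
        apply Submodule.finrank_mono
        apply Finset.sup_le
        intro s _
        rw [hVS]
        apply Submodule.span_le.2
        rintro q ⟨L, M, hL, hM, hwM, rfl⟩
        exact Submodule.subset_span ⟨L, M, hL, hM, rfl⟩

lemma exists_single_of_sum_one (d : Fin N →₀ ℕ) (hd : (d.sum fun _ e => e) = 1) :
    ∃ i, d = Finsupp.single i 1 := by
  rw [Finsupp.sum_fintype _ _ (fun _ => rfl)] at hd
  obtain ⟨i, hi⟩ : ∃ i, d i ≠ 0 := by
    by_contra h
    push_neg at h
    rw [Finset.sum_congr rfl (fun j _ => h j), Finset.sum_const_zero] at hd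
    exact one_ne_zero hd.symm
  have hsplit : d i + ∑ l ∈ Finset.univ.erase i, d l = 1 := by
    rw [Finset.add_sum_erase _ _ (Finset.mem_univ i)]
    exact hd
  have hdi : d i = 1 := by omega
  have hrest : ∑ l ∈ Finset.univ.erase i, d l = 0 := by omega
  refine ⟨i, ?_⟩
  ext l
  rcases eq_or_ne l i with rfl | hl
  · rw [Finsupp.single_eq_same, hdi]
  · rw [Finsupp.single_eq_of_ne' (Ne.symm hl)]
    exact (Finset.sum_eq_zero_iff.1 hrest) l (Finset.mem_erase.2 ⟨hl, Finset.mem_univ l⟩)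

lemma eq_subst_of_homog1 (A : Fin N → MvPolynomial (Fin N) ℂ)
    (hA : ∀ j, (A j).IsHomogeneous 1) :
    A = subst (fun i j => MvPolynomial.coeff (Finsupp.single i 1) (A j)) := by
  funext j
  have : subst (fun i j => MvPolynomial.coeff (Finsupp.single i 1) (A j)) j
      = ∑ i, MvPolynomial.monomial (Finsupp.single i 1)
          (MvPolynomial.coeff (Finsupp.single i 1) (A j)) := rfl
  rw [this]
  ext d
  rw [MvPolynomial.coeff_sum]
  by_cases hd : (d.sum fun _ e => e) = 1
  · obtain ⟨i0, rfl⟩ := exists_single_of_sum_one d hd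
    rw [Finset.sum_eq_single i0]
    · rw [MvPolynomial.coeff_monomial, if_pos rfl]
    · intro l _ hl
      rw [MvPolynomial.coeff_monomial, if_neg]
      intro hEq
      exact hl (Finsupp.single_left_injective one_ne_zero hEq)
    · intro h
      exact absurd (Finset.mem_univ i0) h
  · rw [(hA j).coeff_eq_zero (by rwa [← degree_eq_sum])]
    symm
    apply Finset.sum_eq_zero
    intro l _
    rw [MvPolynomial.coeff_monomial, if_neg]
    intro hEq
    apply hd
    rw [← hEq, Finsupp.sum_single_index]
    rfl

lemma subst_diag_eq_projD (D : Fin N → ℂ) :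
    subst (Matrix.diagonal (fun i => if D i = 0 then (0:ℂ) else 1))
      = projD (fun i => ¬ (D i = 0)) := by
  classical
  funext j
  rw [subst, Finset.sum_eq_single j]
  · rw [Matrix.diagonal_apply_eq]
    simp only [projD]
    by_cases h : D j = 0
    · rw [if_pos h, if_neg (not_not_intro h), MvPolynomial.monomial_zero]
    · rw [if_neg h, if_pos h]
      rfl
  · intro l _ hl
    rw [Matrix.diagonal_apply_ne _ hl, MvPolynomial.monomial_zero]
  · intro h
    exact absurd (Finset.mem_univ j) h

end ShiftedPartialsAux




/-- If `P` is obtained from `Q` by a linear substitution of variables (each variable of `Q`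
replaced by a linear form), then the shifted partial derivative spaces of `P` are at most as
large as those of `Q`: for every `k ≤ n` and `τ ≥ 0`,
`dim I^{P,k}_{n−k+τ} ≤ dim I^{Q,k}_{n−k+τ}`. -/
theorem shifted_partials_mono_under_substitution (N n : ℕ)
    (P Q : MvPolynomial (Fin N) ℂ)
    (hP : P.IsHomogeneous n) (hQ : Q.IsHomogeneous n)
    (A : Fin N → MvPolynomial (Fin N) ℂ) (hA : ∀ i, (A i).IsHomogeneous 1)
    (hPQ : P = MvPolynomial.aeval A Q) :
    ∀ k ≤ n, ∀ τ : ℕ,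
      Module.finrank ℂ (shiftedPartialsSpan P k τ) ≤
        Module.finrank ℂ (shiftedPartialsSpan Q k τ) := by
  classical
  intro k _hk τ
  subst hPQ
  rw [ShiftedPartialsAux.eq_subst_of_homog1 A hA]
  set a : Matrix (Fin N) (Fin N) ℂ :=
    fun i j => MvPolynomial.coeff (Finsupp.single i 1) (A j) with ha
  obtain ⟨Lt, Lt', D, hdec⟩ :=
    Matrix.Pivot.exists_list_transvec_mul_diagonal_mul_list_transvec a
  set TL : Matrix (Fin N) (Fin N) ℂ :=
    (Lt.map Matrix.TransvectionStruct.toMatrix).prod with hTL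
  set TL' : Matrix (Fin N) (Fin N) ℂ :=
    (Lt'.map Matrix.TransvectionStruct.toMatrix).prod with hTL'
  set dE : Matrix (Fin N) (Fin N) ℂ :=
    Matrix.diagonal (fun i => if D i = 0 then (1:ℂ) else D i) with hdE
  set dS : Matrix (Fin N) (Fin N) ℂ :=
    Matrix.diagonal (fun i => if D i = 0 then (0:ℂ) else 1) with hdS
  have hDsplit : Matrix.diagonal D = dE * dS := by
    rw [hdE, hdS, Matrix.diagonal_mul_diagonal]
    apply congrArg Matrix.diagonal
    funext i
    show D i = (if D i = 0 then (1:ℂ) else D i) * (if D i = 0 then (0:ℂ) else 1)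
    by_cases h : D i = 0
    · rw [if_pos h, if_pos h, mul_zero, h]
    · rw [if_neg h, if_neg h, mul_one]
  set u : Matrix (Fin N) (Fin N) ℂ := TL * dE with hu'
  have hufact : a = u * dS * TL' := by
    rw [hdec, hDsplit, hu', ← Matrix.mul_assoc]
  have hu : IsUnit u.det := by
    rw [hu', Matrix.det_mul, hTL, Matrix.TransvectionStruct.det_toMatrix_prod, one_mul, hdE,
      Matrix.det_diagonal, isUnit_iff_ne_zero]
    rw [Finset.prod_ne_zero_iff]
    intro i _
    split_ifs with h
    · exact one_ne_zero
    · exact h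
  have hv : IsUnit TL'.det := by
    rw [hTL', Matrix.TransvectionStruct.det_toMatrix_prod]
    exact isUnit_one
  have step : MvPolynomial.aeval (ShiftedPartialsAux.subst a) Q
      = MvPolynomial.aeval (ShiftedPartialsAux.subst u)
          (MvPolynomial.aeval (ShiftedPartialsAux.subst dS)
            (MvPolynomial.aeval (ShiftedPartialsAux.subst TL') Q)) := by
    rw [hufact, ← ShiftedPartialsAux.aeval_subst_subst, ← ShiftedPartialsAux.aeval_subst_subst]
  rw [step]
  calc Module.finrank ℂ (shiftedPartialsSpan (MvPolynomial.aeval (ShiftedPartialsAux.subst u)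
          (MvPolynomial.aeval (ShiftedPartialsAux.subst dS)
            (MvPolynomial.aeval (ShiftedPartialsAux.subst TL') Q))) k τ)
      ≤ Module.finrank ℂ (shiftedPartialsSpan (MvPolynomial.aeval (ShiftedPartialsAux.subst dS)
          (MvPolynomial.aeval (ShiftedPartialsAux.subst TL') Q)) k τ) :=
        ShiftedPartialsAux.finrank_sps_subst_le u u⁻¹ (Matrix.mul_nonsing_inv u hu) _ k τ
    _ ≤ Module.finrank ℂ (shiftedPartialsSpan
          (MvPolynomial.aeval (ShiftedPartialsAux.subst TL') Q) k τ) := by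
        rw [hdS, ShiftedPartialsAux.subst_diag_eq_projD D]
        exact ShiftedPartialsAux.finrank_sps_projD_le _ _ k τ
    _ ≤ Module.finrank ℂ (shiftedPartialsSpan Q k τ) :=
        ShiftedPartialsAux.finrank_sps_subst_le TL' TL'⁻¹ (Matrix.mul_nonsing_inv TL' hv) Q k τ
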